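/- For the circularly polarized Rabi problem, the explicit matrix function R(τ) whose columns are R₁ = (f² cos(τΩ) + (ν−1)², f(2(ν−1)cos τ sin²(τΩ/2) + Ω sin τ sin(τΩ)), f(2(ν−1) sin τ sin²(τΩ/2) − Ω cos τ sin(τΩ)))ᵀ/Ω², and the analogous R₂, R₃ given in the paper, satisfies dR/dτ = H(τ) R(τ) with R(0) = 1, where H(τ) is the antisymmetric matrix of the field h(τ) = (ν, f cos τ, f sin τ) and Ω = √(f² + (1−ν)²). -/

import Mathlib

open Matrix Real

/-- The antisymmetric matrix of the circularly polarized field `h(τ) = (ν, f cos τ, f sin τ)`. -/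
noncomputable def Hcirc (f ν τ : ℝ) : Matrix (Fin 3) (Fin 3) ℝ :=
  !![0, -(f * Real.sin τ), f * Real.cos τ;
     f * Real.sin τ, 0, -ν;
     -(f * Real.cos τ), ν, 0]

/-- The explicit fundamental solution of the circularly polarized Rabi problem,
with columns `R₁, R₂, R₃` divided by `Ω²`, where `Ω = √(f² + (1−ν)²)`. -/
noncomputable def Rcirc (f ν τ : ℝ) : Matrix (Fin 3) (Fin 3) ℝ :=
  (Real.sqrt (f^2 + (1 - ν)^2) ^ 2)⁻¹ •
  (letI Ω := Real.sqrt (f^2 + (1 - ν)^2)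
   !![f^2 * Real.cos (τ*Ω) + (ν - 1)^2,
        -(f*(ν - 1)*(Real.cos (τ*Ω) - 1)),
        f*Ω*Real.sin (τ*Ω);
      f*(2*(ν - 1)*Real.cos τ*(Real.sin (τ*Ω/2))^2 + Ω*Real.sin τ*Real.sin (τ*Ω)),
        Real.cos τ*(f^2 + (ν - 1)^2*Real.cos (τ*Ω)) - (ν - 1)*Ω*Real.sin τ*Real.sin (τ*Ω),
        -(Ω*((ν - 1)*Real.cos τ*Real.sin (τ*Ω) + Ω*Real.sin τ*Real.cos (τ*Ω)));
      f*(2*(ν - 1)*Real.sin τ*(Real.sin (τ*Ω/2))^2 - Ω*Real.cos τ*Real.sin (τ*Ω)),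
        Real.sin τ*(f^2 + (ν - 1)^2*Real.cos (τ*Ω)) + (ν - 1)*Ω*Real.cos τ*Real.sin (τ*Ω),
        Ω*(Ω*Real.cos τ*Real.cos (τ*Ω) - (ν - 1)*Real.sin τ*Real.sin (τ*Ω))])

private lemma hdcos (Ω x : ℝ) :
    HasDerivAt (fun t : ℝ => Real.cos (t*Ω)) (-Real.sin (x*Ω)*Ω) x :=
  by have h := (Real.hasDerivAt_cos (x*Ω)).comp x (hasDerivAt_mul_const Ω); exact h

private lemma hdsin (Ω x : ℝ) :
    HasDerivAt (fun t : ℝ => Real.sin (t*Ω)) (Real.cos (x*Ω)*Ω) x :=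
  by have h := (Real.hasDerivAt_sin (x*Ω)).comp x (hasDerivAt_mul_const Ω); exact h

private lemma hdq (Ω x : ℝ) :
    HasDerivAt (fun t : ℝ => Real.sin (t*Ω/2)^2) (Real.sin (x*Ω)*(Ω/2)) x := by
  have h1 : HasDerivAt (fun t : ℝ => t*Ω/2) (Ω/2) x := (hasDerivAt_mul_const Ω).div_const 2
  have h2 := ((Real.hasDerivAt_sin (x*Ω/2)).comp x h1).pow 2
  refine h2.congr_deriv ?_
  simp only [Function.comp_apply]
  rw [show x*Ω = 2*(x*Ω/2) by ring, Real.sin_two_mul]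
  ring

/-- The explicit matrix function solves `R' = H R` with `R(0) = 1`. -/
theorem stmt_13 (f ν : ℝ) (hΩ : Real.sqrt (f^2 + (1 - ν)^2) > 0) :
    (∀ τ : ℝ, ∀ i j, HasDerivAt (fun t => Rcirc f ν t i j)
        ((Hcirc f ν τ * Rcirc f ν τ) i j) τ) ∧
    Rcirc f ν 0 = 1 := by
  have h0 : (0:ℝ) ≤ f^2 + (1 - ν)^2 := by positivity
  have hne : f^2 + (1 - ν)^2 ≠ 0 := ne_of_gt (Real.sqrt_pos.mp hΩ)
  constructor
  · intro τ i j
    fin_cases i <;> fin_cases j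
    · -- (0,0)
      simp [Rcirc, Hcirc, Matrix.mul_apply, Fin.sum_univ_three]
      set Ω := Real.sqrt (f^2 + (1 - ν)^2) with hW
      refine ((((hdcos Ω τ).const_mul (f^2)).add_const ((ν-1)^2)).const_mul ((Ω^2)⁻¹)).congr_deriv ?_
      linear_combination ((Ω^2)⁻¹*((f)^2*(Ω)*(Real.sin (τ*Ω)))) * (Real.sin_sq_add_cos_sq τ)
    · -- (0,1)
      simp [Rcirc, Hcirc, Matrix.mul_apply, Fin.sum_univ_three]
      set Ω := Real.sqrt (f^2 + (1 - ν)^2) with hW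
      refine ((((hdcos Ω τ).sub_const 1).const_mul (f*(ν-1))).const_mul ((Ω^2)⁻¹)).neg.congr_deriv ?_
      linear_combination ((Ω^2)⁻¹*((f)*(Ω)*(Real.sin (τ*Ω)) + (-1)*(f)*(ν)*(Ω)*(Real.sin (τ*Ω)))) * (Real.sin_sq_add_cos_sq τ)
    · -- (0,2)
      simp [Rcirc, Hcirc, Matrix.mul_apply, Fin.sum_univ_three]
      set Ω := Real.sqrt (f^2 + (1 - ν)^2) with hW
      refine (((hdsin Ω τ).const_mul (f*Ω)).const_mul ((Ω^2)⁻¹)).congr_deriv ?_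
      linear_combination ((Ω^2)⁻¹*((-1)*(f)*(Ω)^2*(Real.cos (τ*Ω)))) * (Real.sin_sq_add_cos_sq τ)
    · -- (1,0)
      simp [Rcirc, Hcirc, Matrix.mul_apply, Fin.sum_univ_three]
      set Ω := Real.sqrt (f^2 + (1 - ν)^2) with hW
      have hsq : Ω^2 = f^2 + (1 - ν)^2 := Real.sq_sqrt h0
      have hqrel : Real.sin (τ*Ω/2)^2 = (1 - Real.cos (τ*Ω))/2 := by
        rw [Real.sin_sq_eq_half_sub, show 2*(τ*Ω/2) = τ*Ω by ring]; ring
      refine (((((Real.hasDerivAt_cos τ).const_mul (2*(ν-1))).mul (hdq Ω τ)).add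
          (((Real.hasDerivAt_sin τ).const_mul Ω).mul (hdsin Ω τ))).const_mul f |>.const_mul ((Ω^2)⁻¹)).congr_deriv ?_
      linear_combination ((Ω^2)⁻¹*(2*(f)*(Real.sin τ) + (-4)*(f)*(ν)*(Real.sin τ) + 2*(f)*(ν)^2*(Real.sin τ))) * hqrel + ((Ω^2)⁻¹*((f)*(Real.sin τ)*(Real.cos (τ*Ω)))) * hsq
    · -- (1,1)
      simp [Rcirc, Hcirc, Matrix.mul_apply, Fin.sum_univ_three]
      set Ω := Real.sqrt (f^2 + (1 - ν)^2) with hW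
      have hsq : Ω^2 = f^2 + (1 - ν)^2 := Real.sq_sqrt h0
      refine ((((Real.hasDerivAt_cos τ).mul (((hdcos Ω τ).const_mul ((ν-1)^2)).const_add (f^2))).sub
          (((Real.hasDerivAt_sin τ).const_mul ((ν-1)*Ω)).mul (hdsin Ω τ))).const_mul ((Ω^2)⁻¹)).congr_deriv ?_
      linear_combination ((Ω^2)⁻¹*((Real.sin τ)*(Real.cos (τ*Ω)) + (-1)*(ν)*(Real.sin τ)*(Real.cos (τ*Ω)))) * hsq
    · -- (1,2)
      simp [Rcirc, Hcirc, Matrix.mul_apply, Fin.sum_univ_three]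
      set Ω := Real.sqrt (f^2 + (1 - ν)^2) with hW
      have hsq : Ω^2 = f^2 + (1 - ν)^2 := Real.sq_sqrt h0
      refine ((((((Real.hasDerivAt_cos τ).const_mul (ν-1)).mul (hdsin Ω τ)).add
          (((Real.hasDerivAt_sin τ).const_mul Ω).mul (hdcos Ω τ))).const_mul Ω).const_mul ((Ω^2)⁻¹)).neg.congr_deriv ?_
      linear_combination ((Ω^2)⁻¹*((Ω)*(Real.sin τ)*(Real.sin (τ*Ω)))) * hsq
    · -- (2,0)
      simp [Rcirc, Hcirc, Matrix.mul_apply, Fin.sum_univ_three]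
      set Ω := Real.sqrt (f^2 + (1 - ν)^2) with hW
      have hsq : Ω^2 = f^2 + (1 - ν)^2 := Real.sq_sqrt h0
      have hqrel : Real.sin (τ*Ω/2)^2 = (1 - Real.cos (τ*Ω))/2 := by
        rw [Real.sin_sq_eq_half_sub, show 2*(τ*Ω/2) = τ*Ω by ring]; ring
      refine (((((Real.hasDerivAt_sin τ).const_mul (2*(ν-1))).mul (hdq Ω τ)).sub
          (((Real.hasDerivAt_cos τ).const_mul Ω).mul (hdsin Ω τ))).const_mul f |>.const_mul ((Ω^2)⁻¹)).congr_deriv ?_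
      linear_combination ((Ω^2)⁻¹*((-2)*(f)*(Real.cos τ) + 4*(f)*(ν)*(Real.cos τ) + (-2)*(f)*(ν)^2*(Real.cos τ))) * hqrel + ((Ω^2)⁻¹*((-1)*(f)*(Real.cos τ)*(Real.cos (τ*Ω)))) * hsq
    · -- (2,1)
      simp [Rcirc, Hcirc, Matrix.mul_apply, Fin.sum_univ_three]
      set Ω := Real.sqrt (f^2 + (1 - ν)^2) with hW
      have hsq : Ω^2 = f^2 + (1 - ν)^2 := Real.sq_sqrt h0
      refine ((((Real.hasDerivAt_sin τ).mul (((hdcos Ω τ).const_mul ((ν-1)^2)).const_add (f^2))).add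
          (((Real.hasDerivAt_cos τ).const_mul ((ν-1)*Ω)).mul (hdsin Ω τ))).const_mul ((Ω^2)⁻¹)).congr_deriv ?_
      linear_combination ((Ω^2)⁻¹*((-1)*(Real.cos τ)*(Real.cos (τ*Ω)) + (ν)*(Real.cos τ)*(Real.cos (τ*Ω)))) * hsq
    · -- (2,2)
      simp [Rcirc, Hcirc, Matrix.mul_apply, Fin.sum_univ_three]
      set Ω := Real.sqrt (f^2 + (1 - ν)^2) with hW
      have hsq : Ω^2 = f^2 + (1 - ν)^2 := Real.sq_sqrt h0
      refine (((((Real.hasDerivAt_cos τ).const_mul Ω).mul (hdcos Ω τ)).sub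
          (((Real.hasDerivAt_sin τ).const_mul (ν-1)).mul (hdsin Ω τ))).const_mul Ω |>.const_mul ((Ω^2)⁻¹)).congr_deriv ?_
      linear_combination ((Ω^2)⁻¹*((-1)*(Ω)*(Real.cos τ)*(Real.sin (τ*Ω)))) * hsq
  · ext i j
    fin_cases i <;> fin_cases j <;>
      simp [Rcirc, Matrix.one_apply, Real.sq_sqrt h0, Real.mul_self_sqrt h0,
        Matrix.vecHead, Matrix.vecTail] <;>
      field_simp <;> ring
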